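/- Let n ≥ 1 and let H : ℝ^n → ℝ be a selector. Then H is monotone: if x_i ≤ y_i for all i = 1, …, n, then H(x_1, …, x_n) ≤ H(y_1, …, y_n). -/

import Mathlib

open Filter Set Topology

/-- Pigeonhole for frequently over a finite index type. -/
lemma frequently_exists_of_finite {α ι : Type*} [Finite ι] {l : Filter α}
    {P : ι → α → Prop} (h : ∃ᶠ t in l, ∃ j, P j t) : ∃ j, ∃ᶠ t in l, P j t := by
  by_contra hc
  push_neg at hc
  have : ∀ᶠ t in l, ∀ j, ¬ P j t := Filter.eventually_all.2 hc
  exact (h.and_eventually this).exists.elim (fun t ⟨⟨j, hj⟩, hall⟩ => hall j hj)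

/-- Any selector is monotone. -/
theorem selector_monotone
    (n : ℕ) (hn : 1 ≤ n) (H : (Fin n → ℝ) → ℝ) (hcont : Continuous H)
    (hsel : ∀ x : Fin n → ℝ, ∃ i : Fin n, H x = x i) :
    ∀ x y : Fin n → ℝ, (∀ i, x i ≤ y i) → H x ≤ H y := by
  intro x y hxy
  by_contra hlt
  push_neg at hlt
  -- the path from x to y
  set z : ℝ → Fin n → ℝ := fun t i => x i + t * (y i - x i) with hz
  set f : ℝ → ℝ := fun t => H (z t) with hf
  have hzc : ∀ j, Continuous (fun t => z t j) := by
    intro j; exact continuous_const.add (continuous_id.mul continuous_const)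
  have hfc : Continuous f := hcont.comp (continuous_pi hzc)
  have hf0 : f 0 = H x := by
    simp only [hf, hz]; congr 1; funext i; ring
  have hf1 : f 1 = H y := by
    simp only [hf, hz]; congr 1; funext i; ring
  set v : ℝ := H x with hv
  set S : Set ℝ := {t ∈ Icc (0:ℝ) 1 | v ≤ f t} with hS
  have h0S : (0:ℝ) ∈ S := ⟨⟨le_refl 0, zero_le_one⟩, by rw [hf0]⟩
  have hSne : S.Nonempty := ⟨0, h0S⟩
  have hSbdd : BddAbove S := ⟨1, fun t ht => ht.1.2⟩
  have hSclosed : IsClosed S := by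
    have : S = Icc (0:ℝ) 1 ∩ f ⁻¹' (Ici v) := by
      ext t; simp [hS, Set.mem_sep_iff, and_comm]
    rw [this]
    exact isClosed_Icc.inter (isClosed_Ici.preimage hfc)
  set T : ℝ := sSup S with hT
  have hTS : T ∈ S := hSclosed.csSup_mem hSne hSbdd
  have hT1 : T < 1 := by
    rcases lt_or_eq_of_le hTS.1.2 with h | h
    · exact h
    · exfalso
      have := hTS.2
      rw [h, hf1] at this
      exact absurd this (not_le.2 hlt)
  have hT0 : 0 ≤ T := hTS.1.1
  -- eventually in 𝓝[>] T : t ∈ Ioc T 1 and f t < v and selection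
  have hev : ∀ᶠ t in 𝓝[>] T, t ∈ Ioc T 1 ∧ f t < v ∧ ∃ j, f t = z t j := by
    filter_upwards [Ioc_mem_nhdsGT_of_mem ⟨le_refl T, hT1⟩] with t ht
    have hflt : f t < v := by
      by_contra hge
      push_neg at hge
      have : t ∈ S := ⟨⟨le_trans hT0 ht.1.le, ht.2⟩, hge⟩
      exact absurd (le_csSup hSbdd this) (not_le.2 ht.1)
    exact ⟨ht, hflt, hsel (z t)⟩
  have hfreq : ∃ᶠ t in 𝓝[>] T, ∃ j, t ∈ Ioc T 1 ∧ f t < v ∧ f t = z t j := by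
    apply Filter.Eventually.frequently
    filter_upwards [hev] with t ⟨h1, h2, j, h3⟩
    exact ⟨j, h1, h2, h3⟩
  obtain ⟨j, hj⟩ := frequently_exists_of_finite hfreq
  -- f T = z T j by continuity
  have hfeq : f T = z T j := by
    refine tendsto_nhds_unique_of_frequently_eq (l := 𝓝[>] T)
      ((hfc.tendsto T).mono_left nhdsWithin_le_nhds)
      (((hzc j).tendsto T).mono_left nhdsWithin_le_nhds) ?_
    exact hj.mono (fun t ht => ht.2.2)
  obtain ⟨t, htIoc, htlt, hteq⟩ := hj.exists
  -- z t j ≥ z T j since t ≥ T and y j - x j ≥ 0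
  have hmono : z T j ≤ z t j := by
    have h1 : T ≤ t := htIoc.1.le
    have h2 : 0 ≤ y j - x j := sub_nonneg.2 (hxy j)
    simp only [hz]
    nlinarith
  have hvT : v ≤ f T := hTS.2
  rw [hfeq] at hvT
  rw [hteq] at htlt
  linarith
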